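/- If A(t) is a fanning frame of the form with top block the n×n identity and bottom block M(t) (a smooth curve of n×n matrices with Ṁ(t) invertible), then {A(t),t} = d/dt(Ṁ^{-1}M̈) − (1/2)(Ṁ^{-1}M̈)². -/
import Mathlib


open Matrix

noncomputable section

/-- `MDeriv A A'` says that `A'` is the entrywise derivative of the matrix curve `A`. -/
def MDeriv {m k : Type*} (A A' : ℝ → Matrix m k ℝ) : Prop :=
  ∀ (i : m) (j : k) (t : ℝ), HasDerivAt (fun s => A s i j) (A' t i j) t

/-- for a fanning frame with top block the identity and bottom block
`M(t)`, the Schwarzian `{A(t),t} = 2Q - (1/2)P² - Ṗ` equals the matrix Schwarzian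
`d/dt(Ṁ⁻¹M̈) - (1/2)(Ṁ⁻¹M̈)²`. -/
theorem stmt11 {n : ℕ} (M M' M'' N N' : ℝ → Matrix (Fin n) (Fin n) ℝ)
    (P P' Q : ℝ → Matrix (Fin n) (Fin n) ℝ)
    (hM : MDeriv M M') (hM' : MDeriv M' M'')
    (hMu : ∀ t, IsUnit (M' t))
    (hN : ∀ t, N t = (M' t)⁻¹ * M'' t) (hN' : MDeriv N N')
    (hPQ : ∀ t, fromRows (0 : Matrix (Fin n) (Fin n) ℝ) (M'' t)
        + fromRows (0 : Matrix (Fin n) (Fin n) ℝ) (M' t) * P t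
        + fromRows (1 : Matrix (Fin n) (Fin n) ℝ) (M t) * Q t = 0)
    (hP' : MDeriv P P') :
    ∀ t, (2 : ℝ) • Q t - (2⁻¹ : ℝ) • (P t * P t) - P' t
        = N' t - (2⁻¹ : ℝ) • (N t * N t) := by
  have hblocks : ∀ t, Q t = 0 ∧ M'' t + M' t * P t + M t * Q t = 0 := by
    intro t
    have h := hPQ t
    constructor
    · ext i j
      have h1 := congrFun (congrFun h (Sum.inl i)) j
      simpa [Matrix.add_apply, Matrix.mul_apply, Matrix.one_apply,
        Finset.sum_ite_eq] using h1
    · ext i j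
      have h2 := congrFun (congrFun h (Sum.inr i)) j
      simpa [Matrix.add_apply, Matrix.mul_apply] using h2
  have hPN : ∀ t, P t = -N t := by
    intro t
    obtain ⟨hQ, hB⟩ := hblocks t
    rw [hQ, Matrix.mul_zero, add_zero] at hB
    have hdet := (Matrix.isUnit_iff_isUnit_det _).mp (hMu t)
    have : (M' t)⁻¹ * (M'' t + M' t * P t) = 0 := by rw [hB, Matrix.mul_zero]
    rw [Matrix.mul_add, ← Matrix.mul_assoc, Matrix.nonsing_inv_mul _ hdet,
      Matrix.one_mul] at this
    rw [hN t]
    exact eq_neg_of_add_eq_zero_right this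
  have hP'N : ∀ t, P' t = -N' t := by
    intro t
    ext i j
    have h1 := hP' i j t
    have h2 : HasDerivAt (fun s => P s i j) (-N' t i j) t := by
      have := (hN' i j t).neg
      refine this.congr_of_eventuallyEq (Filter.Eventually.of_forall fun s => ?_)
      show P s i j = -N s i j
      rw [hPN s]; simp
    exact h1.unique h2
  intro t
  rw [(hblocks t).1, hPN t, hP'N t]
  simp [neg_mul_neg]
  abel
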